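/- The hidden features are recovered from the observable features and the ghost bits as follows (Eq. (7) of the paper): (a) for every i with 1 ≤ i < ι 0, φ* i = φ i * ∏_{j : Fin m} (2 * b (ι j) − 1); (b) for every k with k + 1 ≤ m − 1 and every i with ι k < i < ι (k+1), φ* (i − (k+1)) = φ i * ∏_{j : Fin m, j ≥ k+1} (2 * b (ι j) − 1); (c) for every i with ι (m−1) < i ≤ n + m, φ* (i − m) = φ i. -/
import Mathlib

theorem downward_mem_iff' {m : ℕ} (F : Finset (Fin m))
    (hd : ∀ j j' : Fin m, j' ≤ j → j ∈ F → j' ∈ F) (j : Fin m) :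
    j ∈ F ↔ (j : ℕ) < F.card := by
  constructor
  · intro hj
    have hsub : Finset.Iic j ⊆ F := fun x hx => hd j x (Finset.mem_Iic.mp hx) hj
    have := Finset.card_le_card hsub
    rw [Fin.card_Iic] at this
    omega
  · intro hj
    by_contra hnot
    have hsub : F ⊆ Finset.Iio j := by
      intro x hx
      rw [Finset.mem_Iio]
      by_contra hxj
      exact hnot (hd x j (le_of_not_gt hxj) hx)
    have := Finset.card_le_card hsub
    rw [Fin.card_Iio] at this
    omega

theorem strictmono_shift {m : ℕ} (ι : Fin m → ℕ) (h : StrictMono ι) :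
    ∀ (d : ℕ) (a : Fin m) (h2 : (a : ℕ) + d < m), ι a + d ≤ ι ⟨(a : ℕ) + d, h2⟩ := by
  intro d
  induction d with
  | zero => intro a h2; simp
  | succ d ih =>
    intro a h2
    have h3 : (a : ℕ) + d < m := by omega
    have := ih a h3
    have h4 : (⟨(a:ℕ)+d, h3⟩ : Fin m) < ⟨(a:ℕ)+d+1, h2⟩ := by simp [Fin.lt_def]
    have h5 := h h4
    have h6 : ι ⟨(a:ℕ)+(d+1), h2⟩ = ι ⟨(a:ℕ)+d+1, h2⟩ := rfl
    omega

/-- Eq. (7) of the paper: the hidden features are recovered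
from the observable features and the ghost bits. -/
theorem stmt4 (n m : ℕ) (hn : 1 ≤ n) (hm : 1 ≤ m)
    (ι : Fin m → ℕ) (hmono : StrictMono ι)
    (hfirst : 1 ≤ ι ⟨0, hm⟩) (hlast : ι ⟨m - 1, by omega⟩ ≤ n + m)
    (b : ℕ → ℤ) (hb : ∀ k, b k = 0 ∨ b k = 1)
    (c : ℕ → ℤ)
    (hc1 : ∀ i, 1 ≤ i → i < ι ⟨0, hm⟩ → c i = b i)
    (hc2 : ∀ k (hk : k + 1 ≤ m - 1), ∀ i,
      ι ⟨k, by omega⟩ < i → i < ι ⟨k + 1, by omega⟩ → c (i - (k + 1)) = b i)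
    (hc3 : ∀ i, ι ⟨m - 1, by omega⟩ < i → i ≤ n + m → c (i - m) = b i)
    (φs : ℕ → ℤ) (hφs : ∀ i, φs i = ∏ k ∈ Finset.Icc i n, (2 * c k - 1))
    (φ : ℕ → ℤ) (hφ : ∀ i, φ i = ∏ k ∈ Finset.Icc i (n + m), (2 * b k - 1)) :
    (∀ i, 1 ≤ i → i < ι ⟨0, hm⟩ →
      φs i = φ i * ∏ j : Fin m, (2 * b (ι j) - 1)) ∧
    (∀ k (hk : k + 1 ≤ m - 1), ∀ i,
      ι ⟨k, by omega⟩ < i → i < ι ⟨k + 1, by omega⟩ →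
      φs (i - (k + 1)) = φ i *
        ∏ j ∈ Finset.univ.filter (fun j : Fin m => k + 1 ≤ (j : ℕ)),
          (2 * b (ι j) - 1)) ∧
    (∀ i, ι ⟨m - 1, by omega⟩ < i → i ≤ n + m → φs (i - m) = φ i) := by
  have hg2 : ∀ k, (2 * b k - 1) * (2 * b k - 1) = 1 := by
    intro k; rcases hb k with h | h <;> rw [h] <;> ring
  -- lower bound on ghost positions
  have hlb : ∀ j : Fin m, (j : ℕ) + 1 ≤ ι j := by
    intro j
    have h2 : ((⟨0, hm⟩ : Fin m) : ℕ) + (j : ℕ) < m := by simpa using j.isLt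
    have := strictmono_shift ι hmono (j : ℕ) ⟨0, hm⟩ h2
    have he : (⟨((⟨0, hm⟩ : Fin m) : ℕ) + (j : ℕ), h2⟩ : Fin m) = j := by
      apply Fin.ext; simp
    rw [he] at this
    omega
  -- upper bound on ghost positions
  have hub : ∀ j : Fin m, ι j + (m - 1 - (j : ℕ)) ≤ n + m := by
    intro j
    have h2 : (j : ℕ) + (m - 1 - (j : ℕ)) < m := by have := j.isLt; omega
    have := strictmono_shift ι hmono (m - 1 - (j : ℕ)) j h2
    have he : (⟨(j : ℕ) + (m - 1 - (j : ℕ)), h2⟩ : Fin m) = ⟨m - 1, by omega⟩ := by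
      apply Fin.ext; have := j.isLt; simp; omega
    rw [he] at this
    omega
  -- characterization of the ghost-count offset
  have hchar : ∀ i (j : Fin m),
      ι j < i ↔ (j : ℕ) < (Finset.univ.filter (fun j : Fin m => ι j < i)).card := by
    intro i j
    have := downward_mem_iff' (Finset.univ.filter (fun j : Fin m => ι j < i))
      (by
        intro a a' ha hmem
        simp only [Finset.mem_filter, Finset.mem_univ, true_and] at hmem ⊢
        exact lt_of_le_of_lt (hmono.monotone ha) hmem) j
    simpa using this
  have hom : ∀ i, (Finset.univ.filter (fun j : Fin m => ι j < i)).card ≤ m := by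
    intro i
    calc (Finset.univ.filter (fun j : Fin m => ι j < i)).card
        ≤ (Finset.univ : Finset (Fin m)).card := Finset.card_filter_le _ _
      _ = m := by simp
  -- key interface fact
  have hkey : ∀ i, 1 ≤ i → i ≤ n + m → (∀ j : Fin m, ι j ≠ i) →
      ∀ s, s = (Finset.univ.filter (fun j : Fin m => ι j < i)).card →
      c (i - s) = b i ∧ s + 1 ≤ i ∧ i - s ≤ n := by
    intro i h1 h2 hng s hs
    have hsm : s ≤ m := hs ▸ hom i
    rcases Nat.lt_or_ge s 1 with hs0 | hs1
    · -- s = 0 : below the first ghost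
      have hs0' : s = 0 := by omega
      have hι0 : ¬ ι ⟨0, hm⟩ < i := by
        rw [hchar i ⟨0, hm⟩, ← hs]; simp [hs0']
      have hlt : i < ι ⟨0, hm⟩ :=
        lt_of_le_of_ne (le_of_not_gt hι0) (Ne.symm (hng ⟨0, hm⟩))
      have hub0 := hub ⟨0, hm⟩
      simp only [Fin.val_mk] at hub0
      refine ⟨?_, by omega, by omega⟩
      rw [hs0']
      simpa using hc1 i h1 hlt
    rcases Nat.lt_or_ge s m with hsm' | hsm''
    · -- 0 < s < m : between ghosts s-1 and s
      have hks : s - 1 < m := by omega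
      have hlo : ι ⟨s - 1, hks⟩ < i := by
        rw [hchar i ⟨s - 1, hks⟩, ← hs]; simp; omega
      have hhi' : ¬ ι ⟨s, hsm'⟩ < i := by
        rw [hchar i ⟨s, hsm'⟩, ← hs]; simp
      have hhi : i < ι ⟨s, hsm'⟩ :=
        lt_of_le_of_ne (le_of_not_gt hhi') (Ne.symm (hng ⟨s, hsm'⟩))
      have hlbk := hlb ⟨s - 1, hks⟩
      have hubk := hub ⟨s, hsm'⟩
      simp only [Fin.val_mk] at hlbk hubk
      have hk : (s - 1) + 1 ≤ m - 1 := by omega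
      have h1' : ι ⟨s - 1, by omega⟩ < i := hlo
      have h2' : i < ι ⟨s - 1 + 1, by omega⟩ := by
        have he : (⟨s - 1 + 1, by omega⟩ : Fin m) = ⟨s, hsm'⟩ := by
          apply Fin.ext; simp; omega
        rw [he]; exact hhi
      have := hc2 (s - 1) hk i h1' h2'
      have he2 : s - 1 + 1 = s := by omega
      rw [he2] at this
      exact ⟨this, by omega, by omega⟩
    · -- s = m : above the last ghost
      have hsm0 : s = m := by omega
      have hlo : ι ⟨m - 1, by omega⟩ < i := by
        refine (hchar i ⟨m - 1, by omega⟩).mpr ?_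
        simp only [Fin.val_mk]
        omega
      have hlbk := hlb ⟨m - 1, by omega⟩
      simp only [Fin.val_mk] at hlbk
      rw [hsm0]
      exact ⟨hc3 i hlo h2, by omega, by omega⟩
  -- the main downward induction
  have hQ : ∀ d i, i + d = n + m + 1 → 1 ≤ i →
      φs (i - (Finset.univ.filter (fun j : Fin m => ι j < i)).card) =
        ∏ k ∈ (Finset.Icc i (n + m)).filter (fun k => ∀ j : Fin m, ι j ≠ k),
          (2 * b k - 1) := by
    intro d
    induction d with
    | zero =>
      intro i hi h1
      have hi' : i = n + m + 1 := by omega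
      subst hi'
      have hfil : (Finset.univ.filter (fun j : Fin m => ι j < n + m + 1)) =
          Finset.univ := by
        apply Finset.filter_true_of_mem
        intro j _
        have := hub j
        omega
      rw [hfil]
      have : (Finset.univ : Finset (Fin m)).card = m := by simp
      rw [this]
      have h2 : n + m + 1 - m = n + 1 := by omega
      rw [h2, hφs]
      rw [Finset.Icc_eq_empty (by omega), Finset.Icc_eq_empty (by omega)]
      simp
    | succ d ih =>
      intro i hi h1
      have hi2 : i ≤ n + m := by omega
      have ihs := ih (i + 1) (by omega) (by omega)
      have hicc : Finset.Icc i (n + m) = insert i (Finset.Icc (i + 1) (n + m)) := by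
        ext k; simp only [Finset.mem_Icc, Finset.mem_insert]; omega
      by_cases hghost : ∀ j : Fin m, ι j ≠ i
      · -- i is not a ghost position
        have hoeq : (Finset.univ.filter (fun j : Fin m => ι j < i + 1)).card =
            (Finset.univ.filter (fun j : Fin m => ι j < i)).card := by
          congr 1
          apply Finset.filter_congr
          intro j _
          have := hghost j
          constructor <;> intro <;> omega
        rw [hoeq] at ihs
        obtain ⟨hcb, hsle, hsn⟩ := hkey i h1 hi2 hghost _ rfl
        set s := (Finset.univ.filter (fun j : Fin m => ι j < i)).card with hsdef
        rw [hicc, Finset.filter_insert, if_pos hghost, Finset.prod_insert (by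
          simp only [Finset.mem_filter, Finset.mem_Icc]; omega)]
        rw [hφs]
        have hicc2 : Finset.Icc (i - s) n = insert (i - s) (Finset.Icc (i - s + 1) n) := by
          ext k; simp only [Finset.mem_Icc, Finset.mem_insert]; omega
        rw [hicc2, Finset.prod_insert (by simp only [Finset.mem_Icc]; omega)]
        rw [hcb]
        congr 1
        have he : i + 1 - s = i - s + 1 := by omega
        rw [← hφs (i - s + 1), ← he]
        exact ihs
      · -- i is a ghost position
        push_neg at hghost
        obtain ⟨t, ht⟩ := hghost
        have hfil2 : (Finset.univ.filter (fun j : Fin m => ι j < i + 1)) =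
            insert t (Finset.univ.filter (fun j : Fin m => ι j < i)) := by
          ext j
          simp only [Finset.mem_filter, Finset.mem_univ, true_and, Finset.mem_insert]
          constructor
          · intro hj
            rcases Nat.lt_or_ge (ι j) i with h | h
            · exact Or.inr h
            · left
              have : ι j = ι t := by omega
              exact hmono.injective this
          · rintro (rfl | hj) <;> omega
        have hcard2 : (Finset.univ.filter (fun j : Fin m => ι j < i + 1)).card =
            (Finset.univ.filter (fun j : Fin m => ι j < i)).card + 1 := by
          rw [hfil2, Finset.card_insert_of_notMem (by
            simp only [Finset.mem_filter, Finset.mem_univ, true_and]; omega)]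
        rw [hcard2] at ihs
        have he : i + 1 - ((Finset.univ.filter (fun j : Fin m => ι j < i)).card + 1) =
            i - (Finset.univ.filter (fun j : Fin m => ι j < i)).card := by omega
        rw [he] at ihs
        rw [ihs]
        rw [hicc, Finset.filter_insert, if_neg (by push_neg; exact ⟨t, ht⟩)]
  have hQ' : ∀ i, 1 ≤ i → i ≤ n + m + 1 →
      φs (i - (Finset.univ.filter (fun j : Fin m => ι j < i)).card) =
        ∏ k ∈ (Finset.Icc i (n + m)).filter (fun k => ∀ j : Fin m, ι j ≠ k),
          (2 * b k - 1) := fun i h1 h2 => hQ (n + m + 1 - i) i (by omega) h1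
  refine ⟨?_, ?_, ?_⟩
  · -- part (a)
    intro i h1 h2
    have hfil : (Finset.univ.filter (fun j : Fin m => ι j < i)) = ∅ := by
      apply Finset.filter_false_of_mem
      intro j _
      have : ι ⟨0, hm⟩ ≤ ι j := hmono.monotone (by simp [Fin.le_def])
      omega
    have hq := hQ' i h1 (by have := hub ⟨0, hm⟩; simp at this; omega)
    rw [hfil] at hq
    simp only [Finset.card_empty, Nat.sub_zero] at hq
    rw [hq, hφ]
    rw [← Finset.prod_filter_mul_prod_filter_not (Finset.Icc i (n + m))
      (fun k => ∀ j : Fin m, ι j ≠ k)]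
    have himg : (Finset.Icc i (n + m)).filter (fun k => ¬ ∀ j : Fin m, ι j ≠ k) =
        Finset.image ι Finset.univ := by
      ext k
      simp only [Finset.mem_filter, Finset.mem_Icc, Finset.mem_image, Finset.mem_univ,
        true_and, not_forall, not_not]
      constructor
      · rintro ⟨_, j, rfl⟩; exact ⟨j, rfl⟩
      · rintro ⟨j, rfl⟩
        have h0 : ι ⟨0, hm⟩ ≤ ι j := hmono.monotone (by simp [Fin.le_def])
        have := hub j
        exact ⟨⟨by omega, by omega⟩, j, rfl⟩
    rw [himg, Finset.prod_image (fun x _ y _ h => hmono.injective h)]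
    rw [mul_assoc, ← Finset.prod_mul_distrib]
    simp [hg2]
  · -- part (b)
    intro k hk i h1 h2
    have hkm : k < m := by omega
    have hfil : (Finset.univ.filter (fun j : Fin m => ι j < i)) =
        Finset.Iic (⟨k, hkm⟩ : Fin m) := by
      ext j
      simp only [Finset.mem_filter, Finset.mem_univ, true_and, Finset.mem_Iic, Fin.le_def,
        Fin.val_mk]
      constructor
      · intro hj
        by_contra hjk
        push_neg at hjk
        have : ι ⟨k + 1, by omega⟩ ≤ ι j := hmono.monotone (by simp [Fin.le_def]; omega)
        omega
      · intro hj
        have : ι j ≤ ι ⟨k, by omega⟩ := hmono.monotone (by simp [Fin.le_def]; omega)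
        omega
    have hq := hQ' i (by have := hlb ⟨k, hkm⟩; simp at this; omega)
      (by have := hub ⟨k + 1, by omega⟩; simp at this; omega)
    rw [hfil, Fin.card_Iic] at hq
    simp only [Fin.val_mk] at hq
    rw [hq, hφ]
    rw [← Finset.prod_filter_mul_prod_filter_not (Finset.Icc i (n + m))
      (fun k => ∀ j : Fin m, ι j ≠ k)]
    have himg : (Finset.Icc i (n + m)).filter (fun x => ¬ ∀ j : Fin m, ι j ≠ x) =
        Finset.image ι (Finset.univ.filter (fun j : Fin m => k + 1 ≤ (j : ℕ))) := by
      ext x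
      simp only [Finset.mem_filter, Finset.mem_Icc, Finset.mem_image, Finset.mem_univ,
        true_and, not_forall, not_not]
      constructor
      · rintro ⟨⟨hx1, hx2⟩, j, rfl⟩
        refine ⟨j, ?_, rfl⟩
        by_contra hjk
        push_neg at hjk
        have : ι j ≤ ι ⟨k, hkm⟩ := hmono.monotone (by simp [Fin.le_def]; omega)
        omega
      · rintro ⟨j, hj, rfl⟩
        have hj1 : ι ⟨k + 1, by omega⟩ ≤ ι j := hmono.monotone (by simp [Fin.le_def]; omega)
        have := hub j
        exact ⟨⟨by omega, by omega⟩, j, rfl⟩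
    rw [himg, Finset.prod_image (fun x _ y _ h => hmono.injective h)]
    rw [mul_assoc, ← Finset.prod_mul_distrib]
    simp [hg2]
  · -- part (c)
    intro i h1 h2
    have hfil : (Finset.univ.filter (fun j : Fin m => ι j < i)) = Finset.univ := by
      apply Finset.filter_true_of_mem
      intro j _
      have : ι j ≤ ι ⟨m - 1, by omega⟩ := hmono.monotone (by simp [Fin.le_def]; omega)
      omega
    have hq := hQ' i (by have := hlb ⟨m - 1, by omega⟩; simp at this; omega) (by omega)
    rw [hfil] at hq
    have hcard : (Finset.univ : Finset (Fin m)).card = m := by simp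
    rw [hcard] at hq
    rw [hq, hφ]
    apply Finset.prod_congr
    · apply Finset.filter_true_of_mem
      intro x hx
      simp only [Finset.mem_Icc] at hx
      intro j
      have : ι j ≤ ι ⟨m - 1, by omega⟩ := hmono.monotone (by simp [Fin.le_def]; omega)
      omega
    · intro x _; rfl
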